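/- (Intermediate claim in the proof of Theorem 1, case m ≥ 0.) Assume m ≥ 0 and W_m(n) ≠ 0 for every n ∈ ℕ₀. Then P(∂_z) : ℂ[[z]] → ℂ[[z]] is injective and its image equals z^m·ℂ[[z]], that is, the set of formal power series whose coefficients of z^0, …, z^{m−1} all vanish. -/

import Mathlib

open PowerSeries

/-- Formal differentiation `∂_z` on `ℂ[[z]]` as a `ℂ`-linear map. -/
noncomputable def dz : PowerSeries ℂ →ₗ[ℂ] PowerSeries ℂ where
  toFun u := PowerSeries.mk fun n => ((n : ℂ) + 1) * PowerSeries.coeff (n + 1) u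
  map_add' u v := by
    ext n
    simp [mul_add]
  map_smul' c u := by
    ext n
    simp
    ring

/-- The order of vanishing at `0` of a formal power series. -/
noncomputable def ordz (g : PowerSeries ℂ) : ℕ := sInf {k : ℕ | PowerSeries.coeff k g ≠ 0}

/-- The operator `P(∂_z) u = Σ_{j∈Λ} a_j · ∂_z^j u`. -/
noncomputable def Pop (Λ : Finset ℕ) (a : ℕ → PowerSeries ℂ) :
    PowerSeries ℂ →ₗ[ℂ] PowerSeries ℂ :=
  ∑ j ∈ Λ, (LinearMap.mulLeft ℂ (a j)).comp (dz ^ j)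

/-- The characteristic polynomial `W_q` evaluated at a natural number `n`:
`W_q(n) = Σ_{j∈Λ, α_j−j=q} a_{j,j+q} · n(n−1)⋯(n−j+1)`. -/
noncomputable def W (Λ : Finset ℕ) (a : ℕ → PowerSeries ℂ) (q : ℤ) (n : ℕ) : ℂ :=
  ∑ j ∈ Λ.filter (fun j => (ordz (a j) : ℤ) - j = q),
    PowerSeries.coeff (ordz (a j)) (a j) * (n.descFactorial j : ℂ)

lemma coeff_dz (u : PowerSeries ℂ) (n : ℕ) :
    PowerSeries.coeff n (dz u) = ((n : ℂ) + 1) * PowerSeries.coeff (n + 1) u := by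
  simp [dz]

lemma coeff_dz_pow (j : ℕ) (u : PowerSeries ℂ) (n : ℕ) :
    PowerSeries.coeff n ((dz ^ j) u)
      = ((n + j).descFactorial j : ℂ) * PowerSeries.coeff (n + j) u := by
  induction j generalizing n with
  | zero => simp
  | succ j ih =>
    have h0 : (dz ^ (j + 1)) u = dz ((dz ^ j) u) := by
      rw [pow_succ']; rfl
    rw [h0, coeff_dz, ih]
    have h1 : n + 1 + j = n + (j + 1) := by omega
    have h2 : n + (j + 1) - j = n + 1 := by omega
    rw [h1]
    rw [show ((n + (j + 1)).descFactorial (j + 1) : ℂ)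
        = ((n : ℂ) + 1) * ((n + (j + 1)).descFactorial j : ℂ) by
      rw [Nat.descFactorial_succ, h2]; push_cast; ring]
    ring

lemma coeff_lt_ordz {g : PowerSeries ℂ} {k : ℕ} (hk : k < ordz g) :
    PowerSeries.coeff k g = 0 := by
  by_contra h
  exact absurd hk (not_lt.mpr (Nat.sInf_le h))

lemma coeff_ordz_ne_zero {g : PowerSeries ℂ} (hg : g ≠ 0) :
    PowerSeries.coeff (ordz g) g ≠ 0 := by
  have hne : {k : ℕ | PowerSeries.coeff k g ≠ 0}.Nonempty := by
    by_contra h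
    rw [Set.not_nonempty_iff_eq_empty] at h
    apply hg
    ext k
    have : k ∉ ({k : ℕ | PowerSeries.coeff k g ≠ 0}) := h ▸ Set.notMem_empty k
    simpa using this
  exact Nat.sInf_mem hne

/-- Key triangularity computation for a single summand `a_j · ∂^j u`. -/
lemma coeff_mul_dzpow (aj : PowerSeries ℂ) (j M n : ℕ)
    (ha0 : ∀ k < j + M, PowerSeries.coeff k aj = 0)
    (u : PowerSeries ℂ) (hu : ∀ k < n, PowerSeries.coeff k u = 0) :
    PowerSeries.coeff (n + M) (aj * (dz ^ j) u)
      = PowerSeries.coeff (j + M) aj * (n.descFactorial j : ℂ) * PowerSeries.coeff n u := by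
  rw [PowerSeries.coeff_mul]
  by_cases hjn : j ≤ n
  · rw [Finset.sum_eq_single (j + M, n - j)]
    · rw [coeff_dz_pow]
      have h1 : n - j + j = n := Nat.sub_add_cancel hjn
      rw [h1]; ring
    · rintro ⟨p1, p2⟩ hp hne
      replace hp := Finset.HasAntidiagonal.mem_antidiagonal.mp hp
      simp only at hp ⊢
      rcases lt_or_ge p1 (j + M) with h | h
      · rw [ha0 p1 h, zero_mul]
      · rcases eq_or_lt_of_le h with he | hl
        · exfalso; apply hne
          have h2 : p2 = n - j := by omega
          rw [Prod.mk.injEq]; exact ⟨he.symm, h2⟩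
        · have h2 : p2 + j < n := by omega
          rw [coeff_dz_pow, hu _ h2, mul_zero, mul_zero]
    · intro hmem
      exfalso; apply hmem
      refine Finset.HasAntidiagonal.mem_antidiagonal.mpr ?_; simp only; omega
  · have hd : (n.descFactorial j : ℂ) = 0 := by
      norm_cast
      exact Nat.descFactorial_eq_zero_iff_lt.mpr (lt_of_not_ge hjn)
    rw [hd, mul_zero, zero_mul]
    apply Finset.sum_eq_zero
    rintro ⟨p1, p2⟩ hp
    replace hp := Finset.HasAntidiagonal.mem_antidiagonal.mp hp
    simp only at hp ⊢
    have : p1 < j + M := by omega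
    rw [ha0 p1 this, zero_mul]

lemma Pop_apply (Λ : Finset ℕ) (a : ℕ → PowerSeries ℂ) (u : PowerSeries ℂ) :
    Pop Λ a u = ∑ j ∈ Λ, a j * (dz ^ j) u := by
  simp [Pop]

/-- Lemma A: if the first `n` coefficients of `u` vanish, then
`coeff (n+M) (P u) = W_M(n) · coeff n u`. -/
lemma lemA (Λ : Finset ℕ) (a : ℕ → PowerSeries ℂ)
    (M : ℕ) (hM : ∀ j ∈ Λ, j + M ≤ ordz (a j))
    (u : PowerSeries ℂ) (n : ℕ) (hu : ∀ k < n, PowerSeries.coeff k u = 0) :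
    PowerSeries.coeff (n + M) (Pop Λ a u) = W Λ a (M : ℤ) n * PowerSeries.coeff n u := by
  rw [Pop_apply, map_sum, W, Finset.sum_filter, Finset.sum_mul]
  apply Finset.sum_congr rfl
  intro j hj
  have ha0 : ∀ k < j + M, PowerSeries.coeff k (a j) = 0 := by
    intro k hk
    exact coeff_lt_ordz (lt_of_lt_of_le hk (hM j hj))
  rw [coeff_mul_dzpow (a j) j M n ha0 u hu]
  by_cases hc : (ordz (a j) : ℤ) - (j : ℤ) = (M : ℤ)
  · rw [if_pos hc]
    have : ordz (a j) = j + M := by omega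
    rw [this]
  · rw [if_neg hc]
    have hlt : j + M < ordz (a j) := by
      rcases lt_or_eq_of_le (hM j hj) with h | h
      · exact h
      · exfalso; apply hc; omega
    rw [coeff_lt_ordz hlt, zero_mul, zero_mul]

/-- Lemma B: all coefficients of `P u` below `M` vanish. -/
lemma lemB (Λ : Finset ℕ) (a : ℕ → PowerSeries ℂ)
    (M : ℕ) (hM : ∀ j ∈ Λ, j + M ≤ ordz (a j))
    (u : PowerSeries ℂ) (k : ℕ) (hk : k < M) :
    PowerSeries.coeff k (Pop Λ a u) = 0 := by
  rw [Pop_apply, map_sum]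
  apply Finset.sum_eq_zero
  intro j hj
  rw [PowerSeries.coeff_mul]
  apply Finset.sum_eq_zero
  rintro ⟨p1, p2⟩ hp
  replace hp := Finset.HasAntidiagonal.mem_antidiagonal.mp hp
  simp only at hp ⊢
  have : p1 < ordz (a j) := by have := hM j hj; omega
  rw [coeff_lt_ordz this, zero_mul]

/-- Recursively constructed coefficients of a preimage of `f` under `P`. -/
noncomputable def solCoeff (Λ : Finset ℕ) (a : ℕ → PowerSeries ℂ) (M : ℕ)
    (f : PowerSeries ℂ) : ℕ → ℂ
  | n =>
    (PowerSeries.coeff (n + M) f -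
        PowerSeries.coeff (n + M) (Pop Λ a
          (PowerSeries.mk fun k => if h : k < n then solCoeff Λ a M f k else 0)))
      / W Λ a (M : ℤ) n
  termination_by n => n
  decreasing_by exact h

/-- Intermediate claim in the proof of Theorem 1, case `m ≥ 0`:
if `m ≥ 0` and `W_m(n) ≠ 0` for every `n ∈ ℕ₀`, then `P(∂_z)` is injective on `ℂ[[z]]`
and its image is `z^m·ℂ[[z]]`, the set of series whose coefficients of `z^0,…,z^{m−1}` vanish. -/
theorem statement2 (Λ : Finset ℕ) (hΛ : Λ.Nonempty) (a : ℕ → PowerSeries ℂ)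
    (ha : ∀ j ∈ Λ, a j ≠ 0)
    (m : ℤ) (hm : m = Λ.inf' hΛ (fun j => (ordz (a j) : ℤ) - j))
    (hm0 : 0 ≤ m)
    (hW : ∀ n : ℕ, W Λ a m n ≠ 0) :
    Function.Injective (Pop Λ a) ∧
      ∀ f : PowerSeries ℂ,
        f ∈ LinearMap.range (Pop Λ a) ↔ ∀ k : ℕ, (k : ℤ) < m → PowerSeries.coeff k f = 0 := by
  set M : ℕ := m.toNat with hMdef
  have hmM : (M : ℤ) = m := Int.toNat_of_nonneg hm0
  have hM : ∀ j ∈ Λ, j + M ≤ ordz (a j) := by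
    intro j hj
    have h1 : m ≤ (ordz (a j) : ℤ) - (j : ℤ) := hm ▸ Finset.inf'_le _ hj
    omega
  have hW' : ∀ n : ℕ, W Λ a (M : ℤ) n ≠ 0 := by
    intro n; rw [hmM]; exact hW n
  constructor
  · rw [injective_iff_map_eq_zero]
    intro u hu
    ext n
    rw [map_zero]
    induction n using Nat.strong_induction_on with
    | _ n ih =>
      have h1 := lemA Λ a M hM u n ih
      rw [hu, map_zero] at h1
      exact (mul_eq_zero.mp h1.symm).resolve_left (hW' n)
  · intro f
    constructor
    · rintro ⟨u, rfl⟩ k hk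
      have hkM : k < M := by omega
      exact lemB Λ a M hM u k hkM
    · intro hf
      set c : ℕ → ℂ := solCoeff Λ a M f with hc
      set u : PowerSeries ℂ := PowerSeries.mk c with hu
      refine ⟨u, ?_⟩
      ext N
      rcases lt_or_ge N M with hN | hN
      · rw [lemB Λ a M hM u N hN, hf N (by omega)]
      · obtain ⟨n, rfl⟩ : ∃ n, N = n + M := ⟨N - M, by omega⟩
        -- split u = t + r with t the truncation below n
        set t : PowerSeries ℂ := PowerSeries.mk (fun k => if k < n then c k else 0) with ht
        have htd : t = PowerSeries.mk (fun k => if h : k < n then solCoeff Λ a M f k else 0) := by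
          ext k
          simp only [ht, PowerSeries.coeff_mk, hc]
          split_ifs with h <;> simp [h]
        set r : PowerSeries ℂ := u - t with hr
        have hur : u = t + r := by rw [hr]; ring
        have hrlow : ∀ k < n, PowerSeries.coeff k r = 0 := by
          intro k hk
          simp [hr, hu, ht, PowerSeries.coeff_mk, hk]
        have hrn : PowerSeries.coeff n r = c n := by
          simp [hr, hu, ht, PowerSeries.coeff_mk]
        have hA := lemA Λ a M hM r n hrlow
        rw [hrn] at hA
        have hcn : c n = (PowerSeries.coeff (n + M) f -
            PowerSeries.coeff (n + M) (Pop Λ a t)) / W Λ a (M : ℤ) n := by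
          rw [hc, htd]
          conv_lhs => rw [solCoeff]
        rw [hur, map_add, map_add, hA, hcn,
          mul_div_cancel₀ _ (hW' n)]
        ring
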